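/- Let S be a λ-set, κ a regular cardinal such that λ(η,S) ≠ κ for all η ∈ S_i, and G : S → κ a function. Then there is a sub-λ-set S¹ ≤ S and an ordinal γ < κ such that G(η) < γ for every η ∈ S¹. -/

import Mathlib

open Set

namespace Sh521

/-- Finite sequences of ordinals. -/
abbrev Seq := List Ordinal

/-- `W(η,S) = { i : η⌢⟨i⟩ ∈ S }`. -/
def Wset (S : Set Seq) (η : Seq) : Set Ordinal := {i | η ++ [i] ∈ S}

/-- `λ(η,S) = sup W(η,S)`. -/
noncomputable def lamOf (S : Set Seq) (η : Seq) : Ordinal := sSup (Wset S η)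

/-- An ordinal which is a regular uncountable cardinal. -/
def IsRegUncountable (o : Ordinal) : Prop :=
  ∃ κ : Cardinal, κ.IsRegular ∧ Cardinal.aleph0 < κ ∧ o = κ.ord

/-- `C` is unbounded below `κ`. -/
def UnboundedBelow (C : Set Ordinal) (κ : Ordinal) : Prop :=
  ∀ α < κ, ∃ β ∈ C, α ≤ β ∧ β < κ

/-- `C` is closed below `κ`: any limit ordinal `< κ` which is approached by members
of `C` belongs to `C`. -/
def ClosedBelow (C : Set Ordinal) (κ : Ordinal) : Prop :=
  ∀ δ < κ, Order.IsSuccLimit δ → (∀ β < δ, ∃ γ ∈ C, β ≤ γ ∧ γ < δ) → δ ∈ C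

/-- `C` is a stationary subset of `κ`: it meets every club of `κ`. -/
def StationaryBelow (C : Set Ordinal) (κ : Ordinal) : Prop :=
  ∀ D : Set Ordinal, ClosedBelow D κ → UnboundedBelow D κ → (C ∩ D).Nonempty

/-- Definition 3.1: `S` is a `λ`-set: a nonempty set of strictly decreasing finite
sequences of ordinals `< λ`, closed under initial segments, such that whenever
`W(η,S) ≠ ∅`, `λ(η,S)` is a regular uncountable cardinal and `W(η,S)` is stationary
in it; and `λ(⟨⟩,S) = λ`. -/
def IsLambdaSet (lam : Ordinal) (S : Set Seq) : Prop :=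
  S.Nonempty ∧
  (∀ η ∈ S, List.Chain' (fun a b => a > b) η) ∧
  (∀ η ∈ S, ∀ i ∈ η, i < lam) ∧
  (∀ η ∈ S, ∀ ν : Seq, ν <+: η → ν ∈ S) ∧
  (∀ η ∈ S, (Wset S η).Nonempty →
    IsRegUncountable (lamOf S η) ∧ StationaryBelow (Wset S η) (lamOf S η)) ∧
  lamOf S [] = lam

/-- The final elements of `S`. -/
def Sf (S : Set Seq) : Set Seq := {η | η ∈ S ∧ Wset S η = ∅}

/-- The initial elements of `S`. -/
def Si (S : Set Seq) : Set Seq := S \ Sf S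

/-- `S¹ ≤ S²` : `S¹` is a sub-`λ`-set of `S²`. -/
def SubLambdaSet (S1 S2 : Set Seq) : Prop :=
  S1 ⊆ S2 ∧ ∀ η ∈ S1, lamOf S1 η = lamOf S2 η

end Sh521

namespace Sh521

/-! ### Auxiliary club / stationary facts -/

private lemma closedBelow_univ (o : Ordinal) : ClosedBelow Set.univ o :=
  fun _ _ _ _ => trivial

private lemma unboundedBelow_univ (o : Ordinal) : UnboundedBelow Set.univ o :=
  fun α hα => ⟨α, trivial, le_refl _, hα⟩

private lemma StationaryBelow.nonempty' {C : Set Ordinal} {o : Ordinal}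
    (h : StationaryBelow C o) : C.Nonempty := by
  obtain ⟨x, hx, -⟩ := h Set.univ (closedBelow_univ o) (unboundedBelow_univ o)
  exact ⟨x, hx⟩

private lemma lt_iSup_nat {ι : Type*} [Nonempty ι] {f : ι → Ordinal} {a : Ordinal}
    (h : a < ⨆ n, f n) : ∃ n, a < f n := by
  by_contra hc
  push_neg at hc
  exact absurd (ciSup_le' hc) (not_le.mpr h)

/-- A stationary subset of a limit ordinal `c`, all of whose members are `≤ c`,
has supremum `c`. -/
private lemma sSup_eq_of_stationary {c : Ordinal} {W : Set Ordinal}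
    (hb : BddAbove W) (hle : ∀ i ∈ W, i ≤ c) (hlim : Order.IsSuccLimit c)
    (hst : StationaryBelow W c) : sSup W = c := by
  refine le_antisymm (csSup_le hst.nonempty' hle) ?_
  by_contra hlt
  push_neg at hlt
  have hcl : ClosedBelow {β | sSup W < β ∧ β < c} c := by
    intro δ hδ hδl happ
    obtain ⟨γ, hγD, -, hγδ⟩ := happ 0 hδl.pos
    exact ⟨lt_trans hγD.1 hγδ, hδ⟩
  have hsucc : sSup W < sSup W + 1 := by
    rw [Ordinal.add_one_eq_succ]; exact Order.lt_succ _
  have hub : UnboundedBelow {β | sSup W < β ∧ β < c} c := by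
    intro α hα
    have hmax : max α (sSup W + 1) < c := by
      refine max_lt hα ?_
      rw [Ordinal.add_one_eq_succ]
      exact hlim.succ_lt hlt
    exact ⟨max α (sSup W + 1), ⟨lt_of_lt_of_le hsucc (le_max_right _ _), hmax⟩,
      le_max_left _ _, hmax⟩
  obtain ⟨i, hiW, hiD⟩ := hst _ hcl hub
  exact absurd (le_csSup hb hiW) (not_le.mpr hiD.1)

/-- A Fodor-style lemma: a function on a stationary subset of a regular uncountable
`ν.ord` taking values below a smaller limit ordinal `κo` is bounded by some `γ < κo`
on a stationary subset. -/
private lemma fodor_lite {ν : Cardinal} (hν : ν.IsRegular) (hℵ : Cardinal.aleph0 < ν)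
    {κo : Ordinal} (hκlim : Order.IsSuccLimit κo) (hκν : κo < ν.ord)
    {W : Set Ordinal} (hW : StationaryBelow W ν.ord)
    {g : Ordinal → Ordinal} (hg : ∀ i ∈ W, g i < κo) :
    ∃ γ, γ < κo ∧ StationaryBelow {i | i ∈ W ∧ g i < γ} ν.ord := by
  have hνlim : Order.IsSuccLimit ν.ord := Cardinal.isSuccLimit_ord hν.aleph0_le
  by_contra hcon
  push_neg at hcon
  have hD : ∀ γ : Ordinal, ∃ D : Set Ordinal, ClosedBelow D ν.ord ∧ UnboundedBelow D ν.ord ∧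
      (γ < κo → {i | i ∈ W ∧ g i < γ} ∩ D = ∅) := by
    intro γ
    by_cases hγ : γ < κo
    · have h1 := hcon γ hγ
      unfold StationaryBelow at h1
      push_neg at h1
      obtain ⟨D, hD1, hD2, hD3⟩ := h1
      exact ⟨D, hD1, hD2, fun _ => hD3⟩
    · exact ⟨Set.univ, closedBelow_univ _, unboundedBelow_univ _, fun h => absurd h hγ⟩
  choose D hDcl hDub hDdis using hD
  set E : Set Ordinal := {β | ∀ γ < κo, β ∈ D γ} with hEdef
  have hEcl : ClosedBelow E ν.ord := by
    intro δ hδ hδl happ γ hγ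
    refine hDcl γ δ hδ hδl ?_
    intro β hβ
    obtain ⟨x, hxE, hx1, hx2⟩ := happ β hβ
    exact ⟨x, hxE γ hγ, hx1, hx2⟩
  have hnext : ∀ x : Ordinal, ∃ y : Ordinal, x < ν.ord →
      x < y ∧ y < ν.ord ∧ ∀ γ < κo, ∃ w ∈ D γ, x ≤ w ∧ w ≤ y := by
    intro x
    by_cases hx : x < ν.ord
    · have hz : ∀ γ : Ordinal, ∃ w, w ∈ D γ ∧ x ≤ w ∧ w < ν.ord := by
        intro γ
        obtain ⟨w, h1, h2, h3⟩ := hDub γ x hx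
        exact ⟨w, h1, h2, h3⟩
      choose z hz1 hz2 hz3 using hz
      refine ⟨max (Ordinal.bsup κo (fun γ _ => z γ)) (x + 1), fun _ => ⟨?_, ?_, ?_⟩⟩
      · refine lt_of_lt_of_le ?_ (le_max_right _ _)
        rw [Ordinal.add_one_eq_succ]; exact Order.lt_succ _
      · refine max_lt ?_ ?_
        · exact Cardinal.bsup_lt_ord_of_isRegular hν (Cardinal.lt_ord.mp hκν)
            (fun γ _ => hz3 γ)
        · rw [Ordinal.add_one_eq_succ]; exact hνlim.succ_lt hx
      · intro γ hγ
        exact ⟨z γ, hz1 γ, hz2 γ, le_trans (Ordinal.le_bsup _ γ hγ) (le_max_left _ _)⟩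
    · exact ⟨0, fun h => absurd h hx⟩
  choose next hnextp using hnext
  have hEub : UnboundedBelow E ν.ord := by
    intro α hα
    set f : ℕ → Ordinal := fun n => Nat.rec α (fun _ ih => next ih) n with hfdef
    have hflt : ∀ n, f n < ν.ord := by
      intro n
      induction n with
      | zero => exact hα
      | succ n ih => exact (hnextp _ ih).2.1
    have hfmono : ∀ n, f n < f (n + 1) := fun n => (hnextp _ (hflt n)).1
    set δ : Ordinal := ⨆ n : ULift ℕ, f n.down with hδdef
    have hδν : δ < ν.ord := Cardinal.iSup_lt_ord_of_isRegular hν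
      (by simp only [Cardinal.mk_uLift, Cardinal.mk_nat, Cardinal.lift_aleph0]; exact hℵ)
      (fun n => hflt n.down)
    have hfle : ∀ n : ℕ, f n ≤ δ := fun n => Ordinal.le_iSup (fun m : ULift ℕ => f m.down) ⟨n⟩
    have hflt' : ∀ n, f n < δ := fun n => lt_of_lt_of_le (hfmono n) (hfle (n + 1))
    have hδlim : Order.IsSuccLimit δ := by
      refine Ordinal.isSuccLimit_iff.mpr ⟨?_, Order.isSuccPrelimit_of_succ_lt ?_⟩
      · exact ne_of_gt (lt_of_le_of_lt (zero_le (a := f 0)) (hflt' 0))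
      · intro a ha
        obtain ⟨n, hn⟩ := lt_iSup_nat ha
        exact lt_of_le_of_lt (Order.succ_le_of_lt hn) (hflt' n.down)
    have hδE : δ ∈ E := by
      intro γ hγ
      refine hDcl γ δ hδν hδlim ?_
      intro β hβ
      obtain ⟨n, hn⟩ := lt_iSup_nat hβ
      obtain ⟨w, hw, hw1, hw2⟩ := (hnextp (f n.down) (hflt n.down)).2.2 γ hγ
      exact ⟨w, hw, le_trans hn.le hw1, lt_of_le_of_lt hw2 (hflt' (n.down + 1))⟩
    exact ⟨δ, hδE, hfle 0, hδν⟩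
  obtain ⟨i, hiW, hiE⟩ := hW E hEcl hEub
  have hγ : g i + 1 < κo := by
    rw [Ordinal.add_one_eq_succ]; exact hκlim.succ_lt (hg i hiW)
  have hlt : g i < g i + 1 := by
    rw [Ordinal.add_one_eq_succ]; exact Order.lt_succ _
  exact Set.eq_empty_iff_forall_notMem.mp (hDdis (g i + 1) hγ) i
    ⟨⟨hiW, hlt⟩, hiE _ hγ⟩

/-! ### The inductive statement -/

/-- `Good S κo G η` : above `η` one can find a thinned subtree of `S` rooted at `η`,
compatible with `S` in the `λ`-set sense, on which `G` is bounded below `κo`. -/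
private def Good (S : Set Seq) (κo : Ordinal) (G : Seq → Ordinal) (η : Seq) : Prop :=
  ∃ T : Set Seq, ∃ γ : Ordinal,
    T ⊆ S ∧ η ∈ T ∧
    (∀ μ ∈ T, η <+: μ) ∧
    (∀ μ ∈ T, ∀ ρ : Seq, η <+: ρ → ρ <+: μ → ρ ∈ T) ∧
    (∀ μ ∈ T, lamOf T μ = lamOf S μ) ∧
    (∀ μ ∈ T, (Wset T μ).Nonempty → StationaryBelow (Wset T μ) (lamOf T μ)) ∧
    γ < κo ∧ ∀ μ ∈ T, G μ < γ

private lemma good_step {lam : Ordinal} {S : Set Seq} (hS : IsLambdaSet lam S)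
    {κ : Cardinal} (hκ : κ.IsRegular)
    (hne : ∀ η ∈ Si S, lamOf S η ≠ κ.ord)
    {G : Seq → Ordinal} (hG : ∀ η ∈ S, G η < κ.ord)
    {η : Seq} (hη : η ∈ S)
    (IH : ∀ i ∈ Wset S η, Good S κ.ord G (η ++ [i])) :
    Good S κ.ord G η := by
  classical
  obtain ⟨-, hchain, hbd, hpre, hreg, hroot⟩ := hS
  have hκlim : Order.IsSuccLimit κ.ord := Cardinal.isSuccLimit_ord hκ.aleph0_le
  by_cases hW : (Wset S η).Nonempty
  · -- main case
    obtain ⟨hru, hstat⟩ := hreg η hη hW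
    obtain ⟨ν, hνr, hνℵ, hord⟩ := hru
    have hηSi : η ∈ Si S := ⟨hη, fun hf => (Set.nonempty_iff_ne_empty.mp hW) hf.2⟩
    have hνκ : ν.ord ≠ κ.ord := hord ▸ hne η hηSi
    have hνlim : Order.IsSuccLimit ν.ord := Cardinal.isSuccLimit_ord hνr.aleph0_le
    -- choose thinned trees for the children
    have hch : ∀ i : Ordinal, ∃ p : Set Seq × Ordinal, i ∈ Wset S η →
        p.1 ⊆ S ∧ η ++ [i] ∈ p.1 ∧ (∀ μ ∈ p.1, η ++ [i] <+: μ) ∧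
        (∀ μ ∈ p.1, ∀ ρ : Seq, η ++ [i] <+: ρ → ρ <+: μ → ρ ∈ p.1) ∧
        (∀ μ ∈ p.1, lamOf p.1 μ = lamOf S μ) ∧
        (∀ μ ∈ p.1, (Wset p.1 μ).Nonempty → StationaryBelow (Wset p.1 μ) (lamOf p.1 μ)) ∧
        p.2 < κ.ord ∧ (∀ μ ∈ p.1, G μ < p.2) := by
      intro i
      by_cases hi : i ∈ Wset S η
      · obtain ⟨T, γ, h1, h2, h3, h4, h5, h6, h7, h8⟩ := IH i hi
        exact ⟨(T, γ), fun _ => ⟨h1, h2, h3, h4, h5, h6, h7, h8⟩⟩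
      · exact ⟨(∅, 0), fun h => absurd h hi⟩
    choose F hF using hch
    have hsup : sSup (Wset S η) = ν.ord := hord
    have hbdd : BddAbove (Wset S η) := by
      by_contra hb
      rw [csSup_of_not_bddAbove hb, csSup_empty] at hsup
      exact hνlim.pos.ne' hsup.symm
    have hWle : ∀ i ∈ Wset S η, i ≤ ν.ord := fun i hi => hsup ▸ le_csSup hbdd hi
    have hstatν : StationaryBelow (Wset S η) ν.ord := hord ▸ hstat
    -- produce a stationary subset of children with a uniform bound
    have key : ∃ W' : Set Ordinal, W' ⊆ Wset S η ∧ ∃ γ0 : Ordinal,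
        StationaryBelow W' ν.ord ∧ γ0 < κ.ord ∧ ∀ i ∈ W', (F i).2 ≤ γ0 := by
      rcases lt_or_gt_of_ne hνκ with hlt | hgt
      · -- ν.ord < κ.ord : keep all children, bound by a sup
        have hsucclt : ν.ord + 1 < κ.ord := by
          rw [Ordinal.add_one_eq_succ]; exact hκlim.succ_lt hlt
        set g : Ordinal → Ordinal := fun j => if j ∈ Wset S η then (F j).2 else 0 with hgdef
        have hgκ : ∀ j, g j < κ.ord := by
          intro j
          by_cases hj : j ∈ Wset S η
          · simp only [hgdef, if_pos hj]; exact (hF j hj).2.2.2.2.2.2.1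
          · simp only [hgdef, if_neg hj]; exact hκlim.pos
        refine ⟨Wset S η, subset_rfl, Ordinal.bsup (ν.ord + 1) (fun j _ => g j),
          hstatν, ?_, ?_⟩
        · exact Cardinal.bsup_lt_ord_of_isRegular hκ (Cardinal.lt_ord.mp hsucclt)
            (fun j _ => hgκ j)
        · intro i hi
          have hilt : i < ν.ord + 1 := by
            rw [Ordinal.add_one_eq_succ, Order.lt_succ_iff]; exact hWle i hi
          have := Ordinal.le_bsup (fun j (_ : j < ν.ord + 1) => g j) i hilt
          simpa only [hgdef, if_pos hi] using this
      · -- κ.ord < ν.ord : Fodor-style thinning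
        obtain ⟨γ0, hγ0, hstat'⟩ := fodor_lite hνr hνℵ hκlim hgt hstatν
          (g := fun i => (F i).2) (fun i hi => (hF i hi).2.2.2.2.2.2.1)
        exact ⟨{i | i ∈ Wset S η ∧ (F i).2 < γ0}, fun i hi => hi.1, γ0, hstat', hγ0,
          fun i hi => le_of_lt hi.2⟩
    obtain ⟨W', hW'sub, γ0, hW'st, hγ0κ, hγ0b⟩ := key
    set T : Set Seq := insert η (⋃ i ∈ W', (F i).1) with hTdef
    have hFi := fun i (hi : i ∈ W') => hF i (hW'sub hi)
    have hmemT : ∀ i ∈ W', ∀ μ ∈ (F i).1, μ ∈ T := by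
      intro i hi μ hμ
      exact Set.mem_insert_iff.mpr (Or.inr (Set.mem_biUnion hi hμ))
    have hbranch : ∀ μ ∈ T, μ = η ∨ ∃ i ∈ W', μ ∈ (F i).1 := by
      intro μ hμ
      rcases Set.mem_insert_iff.mp hμ with h | h
      · exact Or.inl h
      · obtain ⟨i, hi, hmem⟩ := Set.mem_iUnion₂.mp h
        exact Or.inr ⟨i, hi, hmem⟩
    have hsing : ∀ i j : Ordinal, η ++ [i] <+: η ++ [j] → i = j := by
      intro i j h
      obtain ⟨t, ht⟩ := (List.prefix_append_right_inj η).mp h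
      simp only [List.singleton_append, List.cons.injEq] at ht
      exact ht.1
    -- the children of η in T are exactly W'
    have hWTη : Wset T η = W' := by
      ext j
      constructor
      · intro hj
        rcases hbranch _ hj with h | ⟨i, hi, hmem⟩
        · exfalso
          have := congrArg List.length h
          simp at this
        · have hpref : η ++ [i] <+: η ++ [j] := (hFi i hi).2.2.1 _ hmem
          exact hsing i j hpref ▸ hi
      · intro hj
        exact hmemT j hj _ (hFi j hj).2.1
    -- within a branch, children in T are children in that branch
    have hWTμ : ∀ i ∈ W', ∀ μ ∈ (F i).1, Wset T μ = Wset (F i).1 μ := by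
      intro i hi μ hμ
      have hiη : η ++ [i] <+: μ := (hFi i hi).2.2.1 μ hμ
      ext j
      constructor
      · intro hj
        rcases hbranch _ hj with h | ⟨i', hi', hmem⟩
        · exfalso
          have hlen : (η ++ [i]).length ≤ μ.length := hiη.length_le
          have := congrArg List.length h
          simp only [List.length_append, List.length_singleton] at this hlen
          omega
        · have h1 : η ++ [i'] <+: μ ++ [j] := (hFi i' hi').2.2.1 _ hmem
          have h2 : η ++ [i] <+: μ ++ [j] := hiη.trans (List.prefix_append _ _)
          have hii : i' = i := by
            rcases List.prefix_or_prefix_of_prefix h1 h2 with h | h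
            · exact hsing i' i h
            · exact (hsing i i' h).symm
          exact hii ▸ hmem
      · intro hj
        exact hmemT i hi _ hj
    refine ⟨T, max γ0 (G η + 1), ?_, Set.mem_insert _ _, ?_, ?_, ?_, ?_, ?_, ?_⟩
    · -- T ⊆ S
      intro μ hμ
      rcases hbranch μ hμ with h | ⟨i, hi, hmem⟩
      · exact h ▸ hη
      · exact (hFi i hi).1 hmem
    · -- prefixes
      intro μ hμ
      rcases hbranch μ hμ with h | ⟨i, hi, hmem⟩
      · exact h ▸ List.prefix_rfl
      · exact (List.prefix_append η [i]).trans ((hFi i hi).2.2.1 μ hmem)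
    · -- closure under initial segments above η
      intro μ hμ ρ hηρ hρμ
      rcases hbranch μ hμ with h | ⟨i, hi, hmem⟩
      · have heq : η = ρ := hηρ.eq_of_length_le (h ▸ hρμ).length_le
        rw [← heq]
        exact Set.mem_insert _ _
      · have hiμ : η ++ [i] <+: μ := (hFi i hi).2.2.1 μ hmem
        rcases List.prefix_or_prefix_of_prefix hρμ hiμ with h | h
        · -- ρ <+: η ++ [i] and η <+: ρ : ρ = η or ρ = η ++ [i]
          obtain ⟨r, hr⟩ := hηρ
          rcases r with - | ⟨a, r'⟩
          · simp only [List.append_nil] at hr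
            exact hr ▸ Set.mem_insert _ _
          · have hra : (a :: r' : Seq) <+: [i] := by
              rw [← hr] at h
              exact (List.prefix_append_right_inj η).mp h
            obtain ⟨ha, hr'⟩ := List.cons_prefix_cons.mp hra
            have hr'nil : r' = [] := List.prefix_nil.mp hr'
            have : ρ = η ++ [i] := by rw [← hr, ha, hr'nil]
            exact this ▸ hmemT i hi _ (hFi i hi).2.1
        · exact hmemT i hi _ ((hFi i hi).2.2.2.1 μ hmem ρ h hρμ)
    · -- lamOf agreement
      intro μ hμ
      rcases hbranch μ hμ with h | ⟨i, hi, hmem⟩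
      · subst h
        show sSup (Wset T μ) = lamOf S μ
        rw [hWTη, hord]
        exact sSup_eq_of_stationary (hbdd.mono hW'sub)
          (fun i hi => hWle i (hW'sub hi)) hνlim hW'st
      · show sSup (Wset T μ) = lamOf S μ
        rw [hWTμ i hi μ hmem]
        exact (hFi i hi).2.2.2.2.1 μ hmem
    · -- stationarity
      intro μ hμ hWμ
      rcases hbranch μ hμ with h | ⟨i, hi, hmem⟩
      · subst h
        have hl : lamOf T μ = ν.ord := by
          show sSup (Wset T μ) = ν.ord
          rw [hWTη]
          exact sSup_eq_of_stationary (hbdd.mono hW'sub)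
            (fun i hi => hWle i (hW'sub hi)) hνlim hW'st
        rw [hl]
        show StationaryBelow (Wset T μ) ν.ord
        rw [hWTη]
        exact hW'st
      · have hWeq := hWTμ i hi μ hmem
        have hleq : lamOf T μ = lamOf (F i).1 μ := by
          show sSup (Wset T μ) = sSup (Wset (F i).1 μ)
          rw [hWeq]
        rw [hleq]
        show StationaryBelow (Wset T μ) (lamOf (F i).1 μ)
        rw [hWeq]
        exact (hFi i hi).2.2.2.2.2.1 μ hmem (hWeq ▸ hWμ)
    · -- the bound is < κ.ord
      refine max_lt hγ0κ ?_
      rw [Ordinal.add_one_eq_succ]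
      exact hκlim.succ_lt (hG η hη)
    · -- G is bounded
      intro μ hμ
      rcases hbranch μ hμ with h | ⟨i, hi, hmem⟩
      · subst h
        refine lt_of_lt_of_le ?_ (le_max_right _ _)
        rw [Ordinal.add_one_eq_succ]; exact Order.lt_succ _
      · exact lt_of_lt_of_le (lt_of_lt_of_le ((hFi i hi).2.2.2.2.2.2.2 μ hmem)
          (hγ0b i hi)) (le_max_left _ _)
  · -- η is a final node
    have hWe : Wset S η = ∅ := Set.not_nonempty_iff_eq_empty.mp hW
    have hWT : Wset {η} η = (∅ : Set Ordinal) := by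
      ext j
      simp only [Wset, Set.mem_setOf_eq, Set.mem_singleton_iff, Set.mem_empty_iff_false,
        iff_false]
      intro h
      have := congrArg List.length h
      simp at this
    refine ⟨{η}, G η + 1, Set.singleton_subset_iff.mpr hη, rfl, ?_, ?_, ?_, ?_, ?_, ?_⟩
    · intro μ hμ
      rw [Set.mem_singleton_iff] at hμ
      exact hμ ▸ List.prefix_rfl
    · intro μ hμ ρ hηρ hρμ
      rw [Set.mem_singleton_iff] at hμ
      have heq : η = ρ := hηρ.eq_of_length_le (hμ ▸ hρμ).length_le
      rw [← heq]
      rfl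
    · intro μ hμ
      rw [Set.mem_singleton_iff] at hμ
      subst hμ
      show sSup (Wset {μ} μ) = sSup (Wset S μ)
      rw [hWT, hWe]
    · intro μ hμ hWμ
      rw [Set.mem_singleton_iff] at hμ
      subst hμ
      rw [hWT] at hWμ
      exact absurd hWμ (Set.not_nonempty_empty)
    · rw [Ordinal.add_one_eq_succ]
      exact hκlim.succ_lt (hG η hη)
    · intro μ hμ
      rw [Set.mem_singleton_iff] at hμ
      subst hμ
      rw [Ordinal.add_one_eq_succ]
      exact Order.lt_succ _


/-- Claim 3.2(3). If `S` is a `λ`-set, `κ` regular with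
`λ(η,S) ≠ κ` for all `η ∈ S_i`, and `G : S → κ`, then there is a sub-`λ`-set
`S¹ ≤ S` and `γ < κ` with `G(η) < γ` for every `η ∈ S¹`. -/
theorem bounded_on_sub_lambdaSet (lam : Ordinal) (S : Set Seq) (hS : IsLambdaSet lam S)
    (κ : Cardinal) (hκ : κ.IsRegular) (hne : ∀ η ∈ Si S, lamOf S η ≠ κ.ord)
    (G : Seq → Ordinal) (hG : ∀ η ∈ S, G η < κ.ord) :
    ∃ S1 : Set Seq, IsLambdaSet lam S1 ∧ SubLambdaSet S1 S ∧
      ∃ γ : Ordinal, γ < κ.ord ∧ ∀ η ∈ S1, G η < γ := by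
  have hmain : ∀ o : Ordinal, ∀ η, η ∈ S → ∀ hn : η ≠ [], η.getLast hn = o →
      Good S κ.ord G η := by
    intro o
    induction o using Ordinal.induction with
    | h o IH =>
      intro η hη hn hlast
      refine good_step ⟨hS.1, hS.2.1, hS.2.2.1, hS.2.2.2.1, hS.2.2.2.2.1, hS.2.2.2.2.2⟩
        hκ hne hG hη ?_
      intro i hi
      have hi' : η ++ [i] ∈ S := hi
      have hch := hS.2.1 _ hi'
      unfold List.Chain' at hch
      rw [List.isChain_append] at hch
      have hlt : i < o := by
        have := hch.2.2 (η.getLast hn) (by rw [List.getLast?_eq_getLast hn]; rfl) i rfl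
        rw [hlast] at this
        exact this
      exact IH i hlt (η ++ [i]) hi' (by simp) (by simp [List.getLast_append])
  have hgood : Good S κ.ord G [] := by
    have h0 : ([] : Seq) ∈ S := by
      obtain ⟨η0, hη0⟩ := hS.1
      exact hS.2.2.2.1 η0 hη0 [] List.nil_prefix
    refine good_step hS hκ hne hG h0 ?_
    intro i hi
    have hi' : ([i] : Seq) ∈ S := hi
    exact hmain i [i] hi' (by simp) (List.getLast_singleton _)
  obtain ⟨T, γ, hTS, hT0, hpre, hclos, hlamEq, hstat, hγ, hbound⟩ := hgood
  refine ⟨T, ?_, ⟨hTS, hlamEq⟩, γ, hγ, hbound⟩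
  refine ⟨⟨[], hT0⟩, fun μ hμ => hS.2.1 μ (hTS hμ), fun μ hμ => hS.2.2.1 μ (hTS hμ),
    fun μ hμ ρ hρ => hclos μ hμ ρ List.nil_prefix hρ, ?_, ?_⟩
  · intro μ hμ hWμ
    refine ⟨?_, hstat μ hμ hWμ⟩
    rw [hlamEq μ hμ]
    exact (hS.2.2.2.2.1 μ (hTS hμ) (hWμ.mono (fun j hj => hTS hj))).1
  · rw [hlamEq [] hT0]
    exact hS.2.2.2.2.2

end Sh521
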